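/- Let T be an Artinian commutative ring and let R be a finitely generated commutative T-algebra (an affine T-algebra). If R is an integral domain that is not a field, then R is slender. -/

import Mathlib

universe u

section Aux
variable {R : Type u} [CommRing R]

open Classical in
/-- place `t j` at position `g j`, `0` elsewhere. -/
noncomputable def spread (g : ℕ → ℕ) (t : ℕ → R) : ℕ → R :=
  fun n => if h : ∃ j, g j = n then t h.choose else 0

lemma dvd_linearMap_apply (f : (ℕ → R) →ₗ[R] R) (c : R) (x : ℕ → R)
    (h : ∀ n, c ∣ x n) : c ∣ f x := by
  choose y hy using h
  have hx : x = c • y := funext fun n => by rw [Pi.smul_apply, smul_eq_mul, ← hy n]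
  rw [hx, map_smul, smul_eq_mul]
  exact Dvd.intro _ rfl

lemma key_congruence (f : (ℕ → R) →ₗ[R] R) (a : R) (g : ℕ → ℕ)
    (hg : Function.Injective g) (k : ℕ → ℕ) (hk : Monotone k) (t : ℕ → R)
    (ht : ∀ j, a ^ k j ∣ t j) (N : ℕ) :
    a ^ k N ∣ f (spread g t)
      - ∑ j ∈ Finset.range N, t j * f (Pi.single (g j) 1) := by
  classical
  set x : ℕ → R := spread g t with hxdef
  have hfS : f (x - ∑ j ∈ Finset.range N, t j • (Pi.single (g j) (1:R) : ℕ → R))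
      = f x - ∑ j ∈ Finset.range N, t j * f (Pi.single (g j) 1) := by
    rw [map_sub, map_sum]
    congr 1
    exact Finset.sum_congr rfl fun j _ => by rw [map_smul, smul_eq_mul]
  rw [← hfS]
  apply dvd_linearMap_apply
  intro n
  rw [Pi.sub_apply]
  by_cases hn : ∃ j, g j = n
  · have hxn : x n = t hn.choose := by rw [hxdef, spread, dif_pos hn]
    have hsum : (∑ j ∈ Finset.range N, t j • (Pi.single (g j) (1:R) : ℕ → R)) n
        = if hn.choose ∈ Finset.range N then t hn.choose else 0 := by
      rw [Finset.sum_apply]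
      have heach : ∀ j, (t j • (Pi.single (g j) (1:R) : ℕ → R)) n
          = if j = hn.choose then t j else 0 := by
        intro j
        rw [Pi.smul_apply, Pi.single_apply, smul_eq_mul]
        by_cases hj : j = hn.choose
        · rw [if_pos hj, if_pos, mul_one]
          rw [hj, hn.choose_spec]
        · rw [if_neg hj, if_neg, mul_zero]
          intro hnn
          exact hj (hg (hn.choose_spec.trans hnn)).symm
      rw [Finset.sum_congr rfl fun j _ => heach j,
        Finset.sum_ite_eq' (Finset.range N) hn.choose t]
    rw [hxn, hsum]
    by_cases hmem : hn.choose ∈ Finset.range N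
    · rw [if_pos hmem, sub_self]
      exact dvd_zero _
    · rw [if_neg hmem, sub_zero]
      exact dvd_trans (pow_dvd_pow a (hk (le_of_not_gt (fun h => hmem (Finset.mem_range.mpr h)))))
        (ht hn.choose)
  · have hxn : x n = 0 := by rw [hxdef, spread, dif_neg hn]
    have hsum : (∑ j ∈ Finset.range N, t j • (Pi.single (g j) (1:R) : ℕ → R)) n = 0 := by
      rw [Finset.sum_apply]
      apply Finset.sum_eq_zero
      intro j _
      rw [Pi.smul_apply, Pi.single_apply, smul_eq_mul, if_neg, mul_zero]
      exact fun hnn => hn ⟨j, hnn.symm⟩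
    rw [hxn, hsum, sub_zero]
    exact dvd_zero _

lemma caseA [IsDomain R] [Countable R] (f : (ℕ → R) →ₗ[R] R) (a : R) (ha : a ≠ 0)
    (sep : ∀ b : R, b ≠ 0 → ∃ N, ¬ a ^ N ∣ b)
    (g : ℕ → ℕ) (hg : Function.Injective g)
    (hd : ∀ j, f (Pi.single (g j) 1) ≠ 0) : False := by
  classical
  obtain ⟨r, hr⟩ := exists_surjective_nat R
  set d : ℕ → R := fun j => f (Pi.single (g j) 1) with hddef
  -- the recursive construction of exponents and partial sums
  set F : ℕ → ℕ × R := fun n => Nat.rec ((0 : ℕ), (0 : R))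
    (fun j p => if hp : p.2 = r j then
      (max (sep (a ^ p.1 * d j) (mul_ne_zero (pow_ne_zero _ ha) (hd j))).choose (p.1 + 1),
        p.2 + a ^ p.1 * d j)
      else
      (max (sep (p.2 - r j) (sub_ne_zero.mpr hp)).choose (p.1 + 1), p.2)) n with hFdef
  set kk : ℕ → ℕ := fun j => (F j).1 with hkdef
  set s : ℕ → R := fun j => (F j).2 with hsdef
  set t : ℕ → R := fun j => if (F j).2 = r j then a ^ (F j).1 else 0 with htdef
  have hF : ∀ j, F (j + 1) = (if hp : (F j).2 = r j then
      (max (sep (a ^ (F j).1 * d j) (mul_ne_zero (pow_ne_zero _ ha) (hd j))).choose ((F j).1 + 1),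
        (F j).2 + a ^ (F j).1 * d j)
      else
      (max (sep ((F j).2 - r j) (sub_ne_zero.mpr hp)).choose ((F j).1 + 1), (F j).2)) :=
    fun j => rfl
  have hk_lt : ∀ j, kk j < kk (j + 1) := by
    intro j
    show (F j).1 < (F (j + 1)).1
    rw [hF j]
    by_cases hp : (F j).2 = r j
    · rw [dif_pos hp]
      exact lt_of_lt_of_le (Nat.lt_succ_self _) (le_max_right _ _)
    · rw [dif_neg hp]
      exact lt_of_lt_of_le (Nat.lt_succ_self _) (le_max_right _ _)
  have hkmono : Monotone kk := monotone_nat_of_le_succ fun j => (hk_lt j).le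
  have hs_succ : ∀ j, s (j + 1) = s j + t j * d j := by
    intro j
    show (F (j + 1)).2 = (F j).2 + (if (F j).2 = r j then a ^ (F j).1 else 0) * d j
    rw [hF j]
    by_cases hp : (F j).2 = r j
    · rw [dif_pos hp, if_pos hp]
    · rw [dif_neg hp, if_neg hp, zero_mul, add_zero]
  have ht_dvd : ∀ j, a ^ kk j ∣ t j := by
    intro j
    show a ^ (F j).1 ∣ (if (F j).2 = r j then a ^ (F j).1 else 0)
    by_cases hp : (F j).2 = r j
    · rw [if_pos hp]
    · rw [if_neg hp]
      exact dvd_zero _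
  have hdodge : ∀ j, ¬ a ^ kk (j + 1) ∣ (s (j + 1) - r j) := by
    intro j hdvd
    have hk1 : (F (j+1)).1 = (if hp : (F j).2 = r j then
        (max (sep (a ^ (F j).1 * d j) (mul_ne_zero (pow_ne_zero _ ha) (hd j))).choose ((F j).1 + 1))
        else
        (max (sep ((F j).2 - r j) (sub_ne_zero.mpr hp)).choose ((F j).1 + 1))) := by
      rw [hF j]; by_cases hp : (F j).2 = r j
      · rw [dif_pos hp, dif_pos hp]
      · rw [dif_neg hp, dif_neg hp]
    by_cases hp : (F j).2 = r j
    · have hs1 : s (j + 1) - r j = a ^ (F j).1 * d j := by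
        rw [hs_succ j]
        show (F j).2 + (if (F j).2 = r j then a ^ (F j).1 else 0) * d j - r j = _
        rw [if_pos hp, hp]
        ring
      rw [hs1] at hdvd
      refine (sep (a ^ (F j).1 * d j) (mul_ne_zero (pow_ne_zero _ ha) (hd j))).choose_spec ?_
      refine dvd_trans (pow_dvd_pow a ?_) hdvd
      show _ ≤ (F (j+1)).1
      rw [hk1, dif_pos hp]
      exact le_max_left _ _
    · have hs1 : s (j + 1) - r j = (F j).2 - r j := by
        rw [hs_succ j]
        show (F j).2 + (if (F j).2 = r j then a ^ (F j).1 else 0) * d j - r j = _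
        rw [if_neg hp, zero_mul, add_zero]
      rw [hs1] at hdvd
      refine (sep ((F j).2 - r j) (sub_ne_zero.mpr hp)).choose_spec ?_
      refine dvd_trans (pow_dvd_pow a ?_) hdvd
      show _ ≤ (F (j+1)).1
      rw [hk1, dif_neg hp]
      exact le_max_left _ _
  have hssum : ∀ N, s N = ∑ j ∈ Finset.range N, t j * d j := by
    intro N
    induction N with
    | zero => simp [hsdef, hFdef]
    | succ n ih => rw [Finset.sum_range_succ, ← ih, hs_succ]
  obtain ⟨j, hj⟩ := hr (f (spread g t))
  have h1 : a ^ kk (j + 1) ∣ f (spread g t) - s (j + 1) := by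
    rw [hssum (j + 1)]
    exact key_congruence f a g hg kk hkmono t ht_dvd (j + 1)
  apply hdodge j
  have h2 : s (j + 1) - r j = -(f (spread g t) - s (j + 1)) := by rw [hj]; ring
  rw [h2]
  exact dvd_neg.mpr h1

lemma caseB (K : Type u) [Field K] [Algebra K R] [IsDomain R] [Algebra.FiniteType K R]
    (hRc : ¬ Countable R)
    (f : (ℕ → R) →ₗ[R] R) (a : R) (ha : a ≠ 0)
    (sep : ∀ b : R, b ≠ 0 → ∃ N, ¬ a ^ N ∣ b)
    (g : ℕ → ℕ) (hg : Function.Injective g)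
    (hd : ∀ j, f (Pi.single (g j) 1) ≠ 0) : False := by
  classical
  set d : ℕ → R := fun j => f (Pi.single (g j) 1) with hddef
  set kk : ℕ → ℕ := fun n => Nat.rec 0
    (fun j kj => max (sep (a ^ kj * d j) (mul_ne_zero (pow_ne_zero _ ha) (hd j))).choose (kj + 1))
    n with hkdef
  have hkk : ∀ j, kk (j + 1)
      = max (sep (a ^ kk j * d j) (mul_ne_zero (pow_ne_zero _ ha) (hd j))).choose (kk j + 1) :=
    fun j => rfl
  have hk_lt : ∀ j, kk j < kk (j + 1) := fun j => by
    rw [hkk j]; exact lt_of_lt_of_le (Nat.lt_succ_self _) (le_max_right _ _)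
  have hkmono : Monotone kk := monotone_nat_of_le_succ fun j => (hk_lt j).le
  have hkey : ∀ j, ¬ a ^ kk (j + 1) ∣ a ^ kk j * d j := by
    intro j hdvd
    refine (sep (a ^ kk j * d j) (mul_ne_zero (pow_ne_zero _ ha) (hd j))).choose_spec ?_
    refine dvd_trans (pow_dvd_pow a ?_) hdvd
    rw [hkk j]
    exact le_max_left _ _
  -- the linear map c ↦ (the sequence with algebraMap(c j) * a^(kk j) at position g j)
  set X : (ℕ → K) →ₗ[K] (ℕ → R) :=
    { toFun := fun c => spread g (fun j => algebraMap K R (c j) * a ^ kk j)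
      map_add' := by
        intro c₁ c₂
        funext n
        show spread g (fun j => algebraMap K R ((c₁ + c₂) j) * a ^ kk j) n
          = spread g (fun j => algebraMap K R (c₁ j) * a ^ kk j) n
            + spread g (fun j => algebraMap K R (c₂ j) * a ^ kk j) n
        unfold spread
        by_cases hn : ∃ j, g j = n
        · simp only [dif_pos hn, Pi.add_apply, map_add, add_mul]
        · simp only [dif_neg hn, add_zero]
      map_smul' := by
        intro m c
        funext n
        show spread g (fun j => algebraMap K R ((m • c) j) * a ^ kk j) n
          = (m • spread g (fun j => algebraMap K R (c j) * a ^ kk j)) n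
        rw [Pi.smul_apply]
        unfold spread
        by_cases hn : ∃ j, g j = n
        · simp only [dif_pos hn, Pi.smul_apply, smul_eq_mul, map_mul, Algebra.smul_def,
            mul_assoc]
        · simp only [dif_neg hn, smul_zero] } with hXdef
  set φ : (ℕ → K) →ₗ[K] R := (f.restrictScalars K).comp X with hφdef
  have hφinj : Function.Injective φ := by
    rw [← LinearMap.ker_eq_bot, LinearMap.ker_eq_bot']
    intro c hc
    by_contra hc0
    have hex : ∃ j, c j ≠ 0 := by
      by_contra hno
      push_neg at hno
      exact hc0 (funext hno)
    set j0 := Nat.find hex with hj0def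
    have hj0 : c j0 ≠ 0 := Nat.find_spec hex
    have hmin : ∀ i, i < j0 → c i = 0 := fun i hi => not_not.mp (Nat.find_min hex hi)
    set t : ℕ → R := fun i => algebraMap K R (c i) * a ^ kk i with htdef
    have ht : ∀ i, a ^ kk i ∣ t i := fun i => dvd_mul_left _ _
    have hcong := key_congruence f a g hg kk hkmono t ht (j0 + 1)
    have hfx : f (spread g t) = 0 := hc
    have hsum : ∑ i ∈ Finset.range (j0 + 1), t i * d i
        = algebraMap K R (c j0) * (a ^ kk j0 * d j0) := by
      rw [Finset.sum_range_succ, Finset.sum_eq_zero, zero_add, mul_assoc]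
      intro i hi
      rw [htdef]
      show algebraMap K R (c i) * a ^ kk i * d i = 0
      rw [hmin i (Finset.mem_range.mp hi), map_zero, zero_mul, zero_mul]
    rw [hfx, hsum, zero_sub] at hcong
    have hcong2 : a ^ kk (j0 + 1) ∣ algebraMap K R (c j0) * (a ^ kk j0 * d j0) :=
      (dvd_neg).mp hcong
    -- divide by the unit algebraMap K R (c j0)
    have hu : IsUnit (algebraMap K R (c j0)) := (hj0.isUnit).map (algebraMap K R)
    obtain ⟨v, hv⟩ := hu.exists_left_inv
    apply hkey j0
    have : v * (algebraMap K R (c j0) * (a ^ kk j0 * d j0)) = a ^ kk j0 * d j0 := by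
      rw [← mul_assoc, hv, one_mul]
    calc a ^ kk (j0 + 1) ∣ v * (algebraMap K R (c j0) * (a ^ kk j0 * d j0)) :=
          hcong2.mul_left v
      _ = a ^ kk j0 * d j0 := this
  -- linear independence of power sequences, transported through φ
  have hli0 := linearIndependent_monoidHom (Multiplicative ℕ) K
  have hli1 : LinearIndependent K
      (fun r : K => ((powersHom K r : Multiplicative ℕ →* K) : Multiplicative ℕ → K)) :=
    hli0.comp (fun r => powersHom K r) (powersHom K).injective
  set E : (Multiplicative ℕ → K) ≃ₗ[K] (ℕ → K) :=
    LinearEquiv.funCongrLeft K K (Multiplicative.ofAdd : ℕ ≃ Multiplicative ℕ) with hEdef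
  set ℓ : (Multiplicative ℕ → K) →ₗ[K] R := φ.comp E.toLinearMap with hℓdef
  have hℓker : LinearMap.ker ℓ = ⊥ :=
    LinearMap.ker_eq_bot.mpr (hφinj.comp E.injective)
  have hli2 := hli1.map' ℓ hℓker
  have hcard : (Cardinal.mk K) ≤ Module.rank K R := hli2.cardinal_le_rank
  -- rank bound via finite type
  obtain ⟨n, π, hπ⟩ := Algebra.FiniteType.iff_quotient_mvPolynomial''.mp
    (inferInstance : Algebra.FiniteType K R)
  have h1 : Module.rank K R ≤ Module.rank K (MvPolynomial (Fin n) K) :=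
    LinearMap.rank_le_of_surjective π.toLinearMap hπ
  have h2 : Module.rank K (MvPolynomial (Fin n) K) ≤ Cardinal.aleph0 := by
    have hb := (MvPolynomial.basisMonomials (Fin n) K).mk_eq_rank
    rw [Cardinal.lift_uzero] at hb
    rw [← hb]
    have : Cardinal.mk (Fin n →₀ ℕ) ≤ Cardinal.aleph0 := Cardinal.mk_le_aleph0
    calc Cardinal.lift.{u} (Cardinal.mk (Fin n →₀ ℕ))
        ≤ Cardinal.lift.{u} Cardinal.aleph0 := Cardinal.lift_le.mpr this
      _ = Cardinal.aleph0 := Cardinal.lift_aleph0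
  have hKcnt : Countable K := Cardinal.mk_le_aleph0_iff.mp (hcard.trans (h1.trans h2))
  have hMv : Countable (MvPolynomial (Fin n) K) := by
    have : Countable ((Fin n →₀ ℕ) →₀ K) := inferInstance
    exact Function.Injective.countable (f := fun x : MvPolynomial (Fin n) K => AddMonoidAlgebra.coeff x)
      (fun x y h => by cases x; cases y; cases h; rfl)
  exact hRc hπ.countable
end Aux

/-- A commutative ring `R` is *slender* if for every `R`-linear map `f : R^ℕ → R` the set
`{n : ℕ | f (e n) ≠ 0}` is finite, where `e n = Pi.single n 1` is the `n`-th standard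
"basis" vector of `R^ℕ`. -/
def IsSlenderRing (R : Type u) [CommRing R] : Prop :=
  ∀ f : (ℕ → R) →ₗ[R] R, {n : ℕ | f (Pi.single n 1) ≠ 0}.Finite

/-- Let `T` be an Artinian commutative ring and let `R` be a finitely
generated commutative `T`-algebra (an affine `T`-algebra). If `R` is an integral domain
that is not a field, then `R` is slender. -/
theorem slender_of_affine_domain_over_artinian (T : Type u) (R : Type u) [CommRing T]
    [IsArtinianRing T] [CommRing R] [Algebra T R] [Algebra.FiniteType T R] [IsDomain R]
    (hR : ¬ IsField R) : IsSlenderRing R := by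
  classical
  intro f
  by_contra hfin
  have hS : {n : ℕ | f (Pi.single n 1) ≠ 0}.Infinite := hfin
  set e := hS.natEmbedding with hedef
  set g : ℕ → ℕ := fun n => (e n : ℕ) with hgdef
  have hg : Function.Injective g := fun m n h => e.injective (Subtype.ext h)
  have hd : ∀ j, f (Pi.single (g j) 1) ≠ 0 := fun j => (e j).2
  -- the base field K
  set K := T ⧸ RingHom.ker (algebraMap T R) with hKdef
  haveI : IsDomain K :=
    Function.Injective.isDomain (RingHom.kerLift (algebraMap T R))
      (RingHom.kerLift_injective (algebraMap T R))
  haveI : (⊥ : Ideal K).IsPrime := Ideal.bot_prime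
  have hmax : (⊥ : Ideal K).IsMaximal := IsArtinianRing.isMaximal_of_isPrime ⊥
  have hKf : IsField K := by
    refine ⟨exists_pair_ne K, mul_comm, fun {α} hα => ?_⟩
    have hspan : Ideal.span {α} = ⊤ := by
      by_contra hne
      have hble := hmax.eq_of_le hne bot_le
      apply hα
      have hmem : α ∈ Ideal.span {α} := Ideal.mem_span_singleton_self α
      rw [← hble] at hmem
      simpa using hmem
    exact (Ideal.span_singleton_eq_top.mp hspan).exists_right_inv
  letI : Field K := hKf.toField
  letI : Algebra K R := RingHom.toAlgebra (RingHom.kerLift (algebraMap T R))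
  haveI : IsScalarTower T K R := by
    refine IsScalarTower.of_algebraMap_eq' ?_
    refine RingHom.ext fun t => ?_
    rw [RingHom.comp_apply, Ideal.Quotient.algebraMap_eq,
      RingHom.algebraMap_toAlgebra, RingHom.kerLift_mk]
  haveI : Algebra.FiniteType K R := Algebra.FiniteType.of_restrictScalars_finiteType T K R
  haveI : IsNoetherianRing K := inferInstance
  haveI : IsNoetherianRing R := Algebra.FiniteType.isNoetherianRing K R
  -- a nonzero nonunit
  obtain ⟨a, ha, hau⟩ : ∃ a : R, a ≠ 0 ∧ ¬ IsUnit a := by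
    by_contra h
    push_neg at h
    apply hR
    refine ⟨exists_pair_ne R, mul_comm, fun {α} hα => ?_⟩
    exact (h α hα).exists_right_inv
  have sep : ∀ b : R, b ≠ 0 → ∃ N, ¬ a ^ N ∣ b := by
    have hIa : (Ideal.span {a} : Ideal R) ≠ ⊤ := by
      rw [Ne, Ideal.span_singleton_eq_top]
      exact hau
    have hKrull := Ideal.iInf_pow_eq_bot_of_isDomain (I := Ideal.span {a}) hIa
    intro b hb
    by_contra h
    push_neg at h
    apply hb
    have hmem : b ∈ (⨅ i : ℕ, (Ideal.span {a} : Ideal R) ^ i) := by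
      refine Submodule.mem_iInf _ |>.mpr fun i => ?_
      rw [Ideal.span_singleton_pow, Ideal.mem_span_singleton]
      exact h i
    rw [hKrull] at hmem
    simpa using hmem
  by_cases hc : Countable R
  · exact caseA f a ha sep g hg hd
  · exact caseB K hc f a ha sep g hg hd
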